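/- Let V be a 6-dimensional real vector space and ω an alternating 3-form on V with Δ(ω) = {0}. Fix a nonzero alternating 6-form θ on V and let Q : V → V be the unique linear map with (ι_vω)∧ω = ι_{Q(v)}θ for all v ∈ V. Then for every v ≠ 0, the kernel K(ι_vω) = {u ∈ V : ω(v,u,·) = 0} of the 2-form ι_vω is exactly the 2-dimensional subspace of V spanned by v and Q(v) (in particular, the 2-form ι_vω has rank 4). -/

import Mathlib

open scoped TensorProduct

/-- The wedge product of real-valued alternating forms
(antisymmetrized shuffle-sum convention, via `AlternatingMap.domCoprod`). -/
noncomputable def wedge {V : Type*} [AddCommGroup V] [Module ℝ V] {p q : ℕ}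
    (α : V [⋀^Fin p]→ₗ[ℝ] ℝ) (β : V [⋀^Fin q]→ₗ[ℝ] ℝ) : V [⋀^Fin (p + q)]→ₗ[ℝ] ℝ :=
  ((LinearMap.mul' ℝ ℝ).compAlternatingMap (α.domCoprod β)).domDomCongr finSumFinEquiv

/-- The interior product `ι_v ω = ω(v, ·, …, ·)`. -/
noncomputable def iota {V : Type*} [AddCommGroup V] [Module ℝ V] {n : ℕ}
    (v : V) (ω : V [⋀^Fin (n + 1)]→ₗ[ℝ] ℝ) : V [⋀^Fin n]→ₗ[ℝ] ℝ :=
  ω.curryLeft v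

/-- `Δ(ω) = {v ∈ V : (ι_v ω) ∧ (ι_v ω) = 0}` for a 3-form `ω`. -/
noncomputable def Delta {V : Type*} [AddCommGroup V] [Module ℝ V]
    (ω : V [⋀^Fin 3]→ₗ[ℝ] ℝ) : Set V :=
  {v | wedge (iota v ω) (iota v ω) = 0}

/-- A form is multisymplectic iff `v ↦ ι_v ω` is injective. -/
noncomputable def Multisymplectic {V : Type*} [AddCommGroup V] [Module ℝ V] {n : ℕ}
    (ω : V [⋀^Fin (n + 1)]→ₗ[ℝ] ℝ) : Prop :=
  Function.Injective fun v : V => iota v ω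

set_option maxRecDepth 4000

section Aux

open Equiv BigOperators

variable {V : Type*} [AddCommGroup V] [Module ℝ V]

theorem wedge_apply {p q : ℕ}
    (α : V [⋀^Fin p]→ₗ[ℝ] ℝ) (β : V [⋀^Fin q]→ₗ[ℝ] ℝ) (x : Fin (p+q) → V) :
    (p.factorial * q.factorial : ℝ) * wedge α β x =
      ∑ τ : Perm (Fin (p+q)), ((Perm.sign τ : ℤ) : ℝ) *
        ((α fun i => x (τ (Fin.castAdd q i))) * (β fun j => x (τ (Fin.natAdd p j)))) := by
  have h := MultilinearMap.domCoprod_alternization_eq α β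
  have h2 := congrArg (fun (f : _ [⋀^(Fin p ⊕ Fin q)]→ₗ[ℝ] (ℝ ⊗[ℝ] ℝ)) =>
    (LinearMap.mul' ℝ ℝ) (f (x ∘ finSumFinEquiv))) h
  rw [MultilinearMap.alternatization_apply, map_sum] at h2
  have hL : (LinearMap.mul' ℝ ℝ)
      ((((Fintype.card (Fin p)).factorial * (Fintype.card (Fin q)).factorial) •
        α.domCoprod β) (x ∘ finSumFinEquiv)) =
      (p.factorial * q.factorial : ℝ) * wedge α β x := by
    rw [AlternatingMap.smul_apply, ← Nat.cast_smul_eq_nsmul ℝ, map_smul]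
    simp only [Fintype.card_fin, smul_eq_mul, Nat.cast_mul]
    congr 1
  rw [hL] at h2
  rw [← h2]
  refine Fintype.sum_equiv (Equiv.permCongr finSumFinEquiv) _ _ ?_
  intro σ
  rw [Units.smul_def, ← Int.cast_smul_eq_zsmul ℝ, map_smul]
  simp only [smul_eq_mul, Perm.sign_permCongr]
  congr 1
  have e1 : (fun i => x ((Equiv.permCongr finSumFinEquiv σ) (Fin.castAdd q i))) =
      (fun i => (x ∘ finSumFinEquiv) (σ (Sum.inl i))) := by
    funext i; simp [Equiv.permCongr_apply, Function.comp]
  have e2 : (fun j => x ((Equiv.permCongr finSumFinEquiv σ) (Fin.natAdd p j))) =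
      (fun j => (x ∘ finSumFinEquiv) (σ (Sum.inr j))) := by
    funext j; simp [Equiv.permCongr_apply, Function.comp]
  rw [e1, e2]
  simp only [MultilinearMap.domDomCongr_apply, MultilinearMap.domCoprod_apply,
    LinearMap.mul'_apply]
  rfl

theorem dfs2 {n : ℕ} (e : Perm (Fin (n+2))) (p : Fin (n + 3)) :
    Equiv.Perm.decomposeFin.symm (p, e) 2 = Equiv.swap 0 p ((e 1).succ) := by
  rw [show (2 : Fin (n+3)) = (1 : Fin (n+2)).succ by rfl, Equiv.Perm.decomposeFin_symm_apply_succ]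

theorem dfs3 {n : ℕ} (e : Perm (Fin (n+3))) (p : Fin (n + 4)) :
    Equiv.Perm.decomposeFin.symm (p, e) 3 = Equiv.swap 0 p ((e 2).succ) := by
  rw [show (3 : Fin (n+4)) = (2 : Fin (n+3)).succ by rfl, Equiv.Perm.decomposeFin_symm_apply_succ]

theorem dfs4 {n : ℕ} (e : Perm (Fin (n+4))) (p : Fin (n + 5)) :
    Equiv.Perm.decomposeFin.symm (p, e) 4 = Equiv.swap 0 p ((e 3).succ) := by
  rw [show (4 : Fin (n+5)) = (3 : Fin (n+4)).succ by rfl, Equiv.Perm.decomposeFin_symm_apply_succ]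

theorem form2_swap (β : V [⋀^Fin 2]→ₗ[ℝ] ℝ) (s t : V) : β ![t,s] = -β ![s,t] := by
  have := AlternatingMap.map_swap β ![s,t] (show (0:Fin 2) ≠ 1 by decide)
  rw [← this]; congr 1; funext i; fin_cases i <;> simp [Equiv.swap_apply_def]

theorem wedge22_apply (β : V [⋀^Fin 2]→ₗ[ℝ] ℝ) (a b c d : V) :
    wedge β β ![a, b, c, d] =
      2 * (β ![a,b] * β ![c,d] - β ![a,c] * β ![b,d] + β ![a,d] * β ![b,c]) := by
  have key := wedge_apply β β ![a,b,c,d]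
  have h24 : ∀ τ : Perm (Fin 4),
      (β fun i => ![a,b,c,d] (τ (Fin.castAdd 2 i))) = β ![ ![a,b,c,d] (τ 0), ![a,b,c,d] (τ 1)] := by
    intro τ; congr 1; funext i; fin_cases i <;> rfl
  have h24' : ∀ τ : Perm (Fin 4),
      (β fun j => ![a,b,c,d] (τ (Fin.natAdd 2 j))) = β ![ ![a,b,c,d] (τ 2), ![a,b,c,d] (τ 3)] := by
    intro τ; congr 1; funext j; fin_cases j <;> rfl
  simp only [h24, h24'] at key
  have expand : (∑ τ : Perm (Fin 4), ((Perm.sign τ : ℤ) : ℝ) *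
        (β ![ ![a,b,c,d] (τ 0), ![a,b,c,d] (τ 1)] * β ![ ![a,b,c,d] (τ 2), ![a,b,c,d] (τ 3)]))
      = 4 * (2 * (β ![a,b] * β ![c,d] - β ![a,c] * β ![b,d] + β ![a,d] * β ![b,c])) := by
    simp only [← Equiv.sum_comp (Equiv.Perm.decomposeFin.symm) , Fintype.sum_prod_type]
    simp only [Equiv.Perm.decomposeFin_symm_apply_zero, Equiv.Perm.decomposeFin_symm_apply_one,
      dfs2, dfs3, Equiv.Perm.decomposeFin.symm_sign]
    simp [Fin.sum_univ_succ, Equiv.swap_apply_def, Fin.succ_ne_zero,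
      show Fin.succ (2:Fin 3) = 3 from rfl, show Fin.succ (1:Fin 3) = 2 from rfl,
      Fin.succ_zero_eq_one, Fin.succ_one_eq_two]
    rw [form2_swap β b a, form2_swap β c a, form2_swap β d a, form2_swap β c b,
      form2_swap β d b, form2_swap β d c]
    ring
  rw [expand] at key
  have hc : (((2:ℕ).factorial * (2:ℕ).factorial : ℝ)) = 4 := by norm_num [Nat.factorial]
  rw [hc] at key
  linarith

theorem wedge23_iota (ω : V [⋀^Fin 3]→ₗ[ℝ] ℝ) (v a b c d : V) :
    wedge (iota v ω) ω ![v,a,b,c,d] = wedge (iota v ω) (iota v ω) ![a,b,c,d] := by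
  have gsw01 : ∀ s t u : V, ω ![s,t,u] = -ω ![t,s,u] := by
    intro s t u
    have := AlternatingMap.map_swap ω ![t,s,u] (show (0:Fin 3) ≠ 1 by decide)
    rw [← this]; congr 1; funext i; fin_cases i <;> simp [Equiv.swap_apply_def]
  have gsw12 : ∀ s t u : V, ω ![s,t,u] = -ω ![s,u,t] := by
    intro s t u
    have := AlternatingMap.map_swap ω ![s,u,t] (show (1:Fin 3) ≠ 2 by decide)
    rw [← this]; congr 1; funext i; fin_cases i <;> simp [Equiv.swap_apply_def]
  have hz1 : ∀ s : V, ω ![v,v,s] = 0 := fun s =>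
    AlternatingMap.map_eq_zero_of_eq ω _ (show (![v,v,s]) 0 = (![v,v,s]) 1 from rfl) (by decide)
  have hz2 : ∀ s : V, ω ![v,s,v] = 0 := fun s =>
    AlternatingMap.map_eq_zero_of_eq ω _ (show (![v,s,v]) 0 = (![v,s,v]) 2 from rfl) (by decide)
  have hβ : ∀ s t : V, (iota v ω) ![s,t] = ω ![v,s,t] := fun s t => rfl
  have i1ab : ω ![v,b,a] = -ω ![v,a,b] := gsw12 v b a
  have i2ab : ω ![a,v,b] = -ω ![v,a,b] := gsw01 a v b
  have i3ab : ω ![b,v,a] = ω ![v,a,b] := by rw [gsw01 b v a, gsw12 v b a, neg_neg]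
  have i4ab : ω ![a,b,v] = ω ![v,a,b] := by rw [gsw12 a b v, gsw01 a v b, neg_neg]
  have i5ab : ω ![b,a,v] = -ω ![v,a,b] := by rw [gsw12 b a v, gsw01 b v a, neg_neg, gsw12 v b a]
  have i1ac : ω ![v,c,a] = -ω ![v,a,c] := gsw12 v c a
  have i2ac : ω ![a,v,c] = -ω ![v,a,c] := gsw01 a v c
  have i3ac : ω ![c,v,a] = ω ![v,a,c] := by rw [gsw01 c v a, gsw12 v c a, neg_neg]
  have i4ac : ω ![a,c,v] = ω ![v,a,c] := by rw [gsw12 a c v, gsw01 a v c, neg_neg]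
  have i5ac : ω ![c,a,v] = -ω ![v,a,c] := by rw [gsw12 c a v, gsw01 c v a, neg_neg, gsw12 v c a]
  have i1ad : ω ![v,d,a] = -ω ![v,a,d] := gsw12 v d a
  have i2ad : ω ![a,v,d] = -ω ![v,a,d] := gsw01 a v d
  have i3ad : ω ![d,v,a] = ω ![v,a,d] := by rw [gsw01 d v a, gsw12 v d a, neg_neg]
  have i4ad : ω ![a,d,v] = ω ![v,a,d] := by rw [gsw12 a d v, gsw01 a v d, neg_neg]
  have i5ad : ω ![d,a,v] = -ω ![v,a,d] := by rw [gsw12 d a v, gsw01 d v a, neg_neg, gsw12 v d a]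
  have i1bc : ω ![v,c,b] = -ω ![v,b,c] := gsw12 v c b
  have i2bc : ω ![b,v,c] = -ω ![v,b,c] := gsw01 b v c
  have i3bc : ω ![c,v,b] = ω ![v,b,c] := by rw [gsw01 c v b, gsw12 v c b, neg_neg]
  have i4bc : ω ![b,c,v] = ω ![v,b,c] := by rw [gsw12 b c v, gsw01 b v c, neg_neg]
  have i5bc : ω ![c,b,v] = -ω ![v,b,c] := by rw [gsw12 c b v, gsw01 c v b, neg_neg, gsw12 v c b]
  have i1bd : ω ![v,d,b] = -ω ![v,b,d] := gsw12 v d b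
  have i2bd : ω ![b,v,d] = -ω ![v,b,d] := gsw01 b v d
  have i3bd : ω ![d,v,b] = ω ![v,b,d] := by rw [gsw01 d v b, gsw12 v d b, neg_neg]
  have i4bd : ω ![b,d,v] = ω ![v,b,d] := by rw [gsw12 b d v, gsw01 b v d, neg_neg]
  have i5bd : ω ![d,b,v] = -ω ![v,b,d] := by rw [gsw12 d b v, gsw01 d v b, neg_neg, gsw12 v d b]
  have i1cd : ω ![v,d,c] = -ω ![v,c,d] := gsw12 v d c
  have i2cd : ω ![c,v,d] = -ω ![v,c,d] := gsw01 c v d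
  have i3cd : ω ![d,v,c] = ω ![v,c,d] := by rw [gsw01 d v c, gsw12 v d c, neg_neg]
  have i4cd : ω ![c,d,v] = ω ![v,c,d] := by rw [gsw12 c d v, gsw01 c v d, neg_neg]
  have i5cd : ω ![d,c,v] = -ω ![v,c,d] := by rw [gsw12 d c v, gsw01 d v c, neg_neg, gsw12 v d c]
  have key := wedge_apply (iota v ω) ω ![v,a,b,c,d]
  have h1 : ∀ τ : Perm (Fin 5),
      ((iota v ω) fun i => ![v,a,b,c,d] (τ (Fin.castAdd 3 i))) =
        ω ![v, ![v,a,b,c,d] (τ 0), ![v,a,b,c,d] (τ 1)] := by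
    intro τ; rw [← hβ]; congr 1; funext i; fin_cases i <;> rfl
  have h2 : ∀ τ : Perm (Fin 5),
      (ω fun j => ![v,a,b,c,d] (τ (Fin.natAdd 2 j))) =
        ω ![ ![v,a,b,c,d] (τ 2), ![v,a,b,c,d] (τ 3), ![v,a,b,c,d] (τ 4)] := by
    intro τ; congr 1; funext j; fin_cases j <;> rfl
  simp only [h1, h2] at key
  have expand : (∑ τ : Perm (Fin 5), ((Perm.sign τ : ℤ) : ℝ) *
        (ω ![v, ![v,a,b,c,d] (τ 0), ![v,a,b,c,d] (τ 1)] *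
         ω ![ ![v,a,b,c,d] (τ 2), ![v,a,b,c,d] (τ 3), ![v,a,b,c,d] (τ 4)]))
      = 12 * (2 * (ω ![v,a,b] * ω ![v,c,d] - ω ![v,a,c] * ω ![v,b,d]
          + ω ![v,a,d] * ω ![v,b,c])) := by
    simp only [← Equiv.sum_comp (Equiv.Perm.decomposeFin.symm) , Fintype.sum_prod_type]
    simp only [Equiv.Perm.decomposeFin_symm_apply_zero, Equiv.Perm.decomposeFin_symm_apply_one,
      dfs2, dfs3, dfs4, Equiv.Perm.decomposeFin.symm_sign]
    simp [Fin.sum_univ_succ, Equiv.swap_apply_def, Fin.succ_ne_zero,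
      show Fin.succ (3:Fin 4) = 4 from rfl, show Fin.succ (2:Fin 4) = 3 from rfl,
      show Fin.succ (1:Fin 4) = 2 from rfl,
      show Fin.succ (2:Fin 3) = 3 from rfl, show Fin.succ (1:Fin 3) = 2 from rfl,
      Fin.succ_zero_eq_one, Fin.succ_one_eq_two]
    simp only [hz1, hz2, i1ab, i2ab, i3ab, i4ab, i5ab, i1ac, i2ac, i3ac, i4ac, i5ac, i1ad, i2ad, i3ad, i4ad, i5ad, i1bc, i2bc, i3bc, i4bc, i5bc, i1bd, i2bd, i3bd, i4bd, i5bd, i1cd, i2cd, i3cd, i4cd, i5cd, zero_mul, mul_zero, neg_mul, mul_neg, neg_neg, zero_add,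
      add_zero, neg_zero, mul_one, one_mul]
    ring
  rw [expand] at key
  rw [wedge22_apply (iota v ω) a b c d]
  simp only [hβ]
  have hc : (((2:ℕ).factorial * (3:ℕ).factorial : ℝ)) = 12 := by norm_num [Nat.factorial]
  rw [hc] at key
  linarith

theorem curry_ker_bound [FiniteDimensional ℝ V]
    (hV : Module.finrank ℝ V = 6) (γ : V [⋀^Fin 4]→ₗ[ℝ] ℝ) (hγ : γ ≠ 0) :
    Module.finrank ℝ (LinearMap.ker (AlternatingMap.curryLeft γ)) ≤ 2 := by
  by_contra hlt
  push_neg at hlt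
  set K := LinearMap.ker (AlternatingMap.curryLeft γ) with hK
  have hker0 : ∀ u ∈ K, ∀ (y : Fin 4 → V), y 0 = u → γ y = 0 := by
    intro u hu y h0
    have hy : y = Matrix.vecCons u (fun i => y i.succ) := by
      funext i
      refine Fin.cases ?_ (fun k => ?_) i
      · simpa using h0
      · simp
    rw [LinearMap.mem_ker] at hu
    calc γ y = (AlternatingMap.curryLeft γ u) (fun i => y i.succ) := by rw [hy]; rfl
      _ = 0 := by rw [hu]; rfl
  have hker : ∀ u ∈ K, ∀ (y : Fin 4 → V) (j : Fin 4), y j = u → γ y = 0 := by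
    intro u hu y j hj
    rcases eq_or_ne j 0 with rfl | hj0
    · exact hker0 u hu y hj
    · have hs := AlternatingMap.map_swap γ y (show (0:Fin 4) ≠ j from Ne.symm hj0)
      have h0 : (y ∘ Equiv.swap 0 j) 0 = u := by
        simp only [Function.comp_apply, Equiv.swap_apply_left]; exact hj
      have h1 := hker0 u hu _ h0
      rw [hs] at h1
      linarith
  have hq : Module.finrank ℝ (V ⧸ K) ≤ 3 := by
    have h := Submodule.finrank_quotient_add_finrank K
    omega
  apply hγ
  ext x
  rw [AlternatingMap.zero_apply]
  have hdep : ¬ LinearIndependent ℝ (fun i : Fin 4 => Submodule.Quotient.mk (p := K) (x i)) := by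
    intro h
    have := h.fintype_card_le_finrank
    simp only [Fintype.card_fin] at this
    omega
  rw [Fintype.not_linearIndependent_iff] at hdep
  obtain ⟨g, hg0, j, hgj⟩ := hdep
  have hw : (∑ i, g i • x i) ∈ K := by
    have hmk : K.mkQ (∑ i, g i • x i) = 0 := by
      rw [map_sum]
      simp only [map_smul, Submodule.mkQ_apply]
      exact hg0
    rwa [Submodule.mkQ_apply, Submodule.Quotient.mk_eq_zero] at hmk
  have h1 : γ (Function.update x j (g j • x j)) = g j * γ x := by
    rw [AlternatingMap.map_update_smul, Function.update_eq_self, smul_eq_mul]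
  have h2 : g j • x j = (∑ i, g i • x i) - ∑ i ∈ Finset.univ.erase j, g i • x i := by
    rw [← Finset.add_sum_erase _ (fun i => g i • x i) (Finset.mem_univ j)]
    abel
  have h3 : γ (Function.update x j (g j • x j)) = 0 := by
    rw [h2, AlternatingMap.map_update_sub]
    have hA : γ (Function.update x j (∑ i, g i • x i)) = 0 :=
      hker _ hw _ j (Function.update_self _ _ _)
    have hB : γ (Function.update x j (∑ i ∈ Finset.univ.erase j, g i • x i)) = 0 := by
      rw [AlternatingMap.map_update_sum]
      apply Finset.sum_eq_zero
      intro i hi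
      rw [AlternatingMap.map_update_smul]
      have hij : j ≠ i := (Finset.mem_erase.mp hi).1.symm
      rw [AlternatingMap.map_update_self _ _ hij, smul_zero]
    rw [hA, hB, sub_zero]
  rw [h3] at h1
  exact ((mul_eq_zero.mp h1.symm).resolve_left hgj)

end Aux

/-- If `Δ(ω) = {0}`, then for every `v ≠ 0` the kernel
`K(ι_v ω) = {u : ω(v,u,·) = 0}` of the 2-form `ι_v ω` is exactly the 2-dimensional
subspace spanned by `v` and `Q v`. -/
theorem kernel_iota_eq_span
    {V : Type*} [AddCommGroup V] [Module ℝ V] [FiniteDimensional ℝ V]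
    (hV : Module.finrank ℝ V = 6)
    (ω : V [⋀^Fin 3]→ₗ[ℝ] ℝ) (hΔ : Delta ω = {0})
    (θ : V [⋀^Fin 6]→ₗ[ℝ] ℝ) (hθ : θ ≠ 0)
    (Q : V →ₗ[ℝ] V) (hQ : ∀ v : V, wedge (iota v ω) ω = iota (Q v) θ) :
    ∀ v : V, v ≠ 0 →
      {u : V | ∀ w : V, ω ![v, u, w] = 0} = (Submodule.span ℝ {v, Q v} : Set V) ∧
      Module.finrank ℝ (Submodule.span ℝ ({v, Q v} : Set V)) = 2 := by
  intro v hv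
  set β : V [⋀^Fin 2]→ₗ[ℝ] ℝ := iota v ω with hβdef
  set γ : V [⋀^Fin 4]→ₗ[ℝ] ℝ := wedge β β with hγdef
  have hγ0 : γ ≠ 0 := by
    intro h
    have hmem : v ∈ Delta ω := h
    rw [hΔ] at hmem
    exact hv hmem
  have hβapp : ∀ s t : V, β ![s,t] = ω ![v,s,t] := fun s t => rfl
  have hβz : ∀ s : V, β ![v,s] = 0 := by
    intro s
    rw [hβapp]
    exact AlternatingMap.map_eq_zero_of_eq ω _ (show (![v,v,s]) 0 = (![v,v,s]) 1 from rfl)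
      (by decide)
  -- the key identity γ(a,b,c,d) = θ(Qv, v, a, b, c, d)
  have hstar : ∀ a b c d : V, γ ![a,b,c,d] = θ ![Q v, v, a, b, c, d] := by
    intro a b c d
    have h := DFunLike.congr_fun (hQ v) ![v,a,b,c,d]
    rw [wedge23_iota ω v a b c d] at h
    exact h
  -- linear independence of v, Q v
  have hpair : LinearIndependent ℝ ![v, Q v] := by
    rw [LinearIndependent.pair_iff]
    intro s t hst
    have ht : t = 0 := by
      by_contra ht
      have h1 : t • Q v = (-s) • v := by
        rw [neg_smul]
        exact eq_neg_of_add_eq_zero_right hst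
      have hQv : Q v = (t⁻¹ * (-s)) • v := by
        calc Q v = t⁻¹ • (t • Q v) := by rw [smul_smul, inv_mul_cancel₀ ht, one_smul]
        _ = (t⁻¹ * (-s)) • v := by rw [h1, smul_smul]
      apply hγ0
      ext x
      rw [AlternatingMap.zero_apply]
      have hx4 : x = ![x 0, x 1, x 2, x 3] := by
        funext i; fin_cases i <;> rfl
      rw [show γ x = γ ![x 0, x 1, x 2, x 3] by rw [← hx4], hstar]
      have hcl : θ ![Q v, v, x 0, x 1, x 2, x 3] =
          (θ.curryLeft (Q v)) ![v, x 0, x 1, x 2, x 3] := rfl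
      rw [hcl, hQv, map_smul, AlternatingMap.smul_apply]
      have hzz : (θ.curryLeft v) ![v, x 0, x 1, x 2, x 3] = 0 := by
        have : θ ![v, v, x 0, x 1, x 2, x 3] = 0 :=
          AlternatingMap.map_eq_zero_of_eq θ _
            (show (![v, v, x 0, x 1, x 2, x 3]) 0 = (![v, v, x 0, x 1, x 2, x 3]) 1 from rfl)
            (by decide)
        exact this
      rw [hzz, smul_zero]
    have hs : s = 0 := by
      rw [ht, zero_smul, add_zero] at hst
      exact (smul_eq_zero.mp hst).resolve_right hv
    exact ⟨hs, ht⟩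
  -- the 1-form φ(y) = β(Qv, y) satisfies φ ∧ β = 0 pointwise
  have hPB : ∀ y z w : V,
      β ![Q v, y] * β ![z,w] - β ![Q v, z] * β ![y,w] + β ![Q v, w] * β ![y,z] = 0 := by
    intro y z w
    have h := hstar (Q v) y z w
    have hz : θ ![Q v, v, Q v, y, z, w] = 0 :=
      AlternatingMap.map_eq_zero_of_eq θ _
        (show (![Q v, v, Q v, y, z, w]) 0 = (![Q v, v, Q v, y, z, w]) 2 from rfl) (by decide)
    rw [hz, hγdef, wedge22_apply] at h
    linarith
  -- φ = 0, i.e. Q v is in the kernel of β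
  have hphi : ∀ s : V, β ![Q v, s] = 0 := by
    by_contra hns
    push_neg at hns
    obtain ⟨s, hs⟩ := hns
    have hB : ∀ y w : V, β ![y, w] =
        (β ![Q v, y]) * ((β ![Q v, s])⁻¹ * β ![s, w])
          - (β ![Q v, w]) * ((β ![Q v, s])⁻¹ * β ![s, y]) := by
      intro y w
      have h := hPB y s w
      have hys : β ![y, s] = -β ![s, y] := form2_swap β s y
      rw [hys] at h
      field_simp
      linarith [mul_comm (β ![Q v, y]) (β ![s, w]), mul_comm (β ![Q v, w]) (β ![s, y])]
    apply hγ0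
    ext x
    rw [AlternatingMap.zero_apply]
    have hx4 : x = ![x 0, x 1, x 2, x 3] := by
      funext i; fin_cases i <;> rfl
    rw [show γ x = γ ![x 0, x 1, x 2, x 3] by rw [← hx4], hγdef, wedge22_apply,
      hB (x 0) (x 1), hB (x 2) (x 3), hB (x 0) (x 2), hB (x 1) (x 3),
      hB (x 0) (x 3), hB (x 1) (x 2)]
    ring
  -- the kernel submodule of γ
  set W := LinearMap.ker (AlternatingMap.curryLeft γ) with hW
  have hmemW : ∀ u : V, (∀ m : Fin 3 → V, γ ![u, m 0, m 1, m 2] = 0) → u ∈ W := by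
    intro u h
    rw [LinearMap.mem_ker]
    ext m
    rw [AlternatingMap.zero_apply]
    have hm : Matrix.vecCons u m = ![u, m 0, m 1, m 2] := by
      funext i; fin_cases i <;> rfl
    calc (AlternatingMap.curryLeft γ u) m = γ (Matrix.vecCons u m) := rfl
      _ = 0 := by rw [hm]; exact h m
  have hvW : v ∈ W := by
    apply hmemW
    intro m
    rw [hγdef, wedge22_apply]
    rw [hβz (m 0), hβz (m 1), hβz (m 2)]
    ring
  have hQvW : Q v ∈ W := by
    apply hmemW
    intro m
    rw [hγdef, wedge22_apply]
    rw [hphi (m 0), hphi (m 1), hphi (m 2)]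
    ring
  have hrange : Set.range ![v, Q v] = {v, Q v} := Matrix.range_cons_cons_empty v (Q v) _
  have hspan2 : Module.finrank ℝ (Submodule.span ℝ ({v, Q v} : Set V)) = 2 := by
    rw [← hrange, finrank_span_eq_card hpair, Fintype.card_fin]
  have hspanleW : Submodule.span ℝ ({v, Q v} : Set V) ≤ W := by
    rw [Submodule.span_le]
    rintro z hz
    rcases hz with rfl | hz
    · exact hvW
    · rw [Set.mem_singleton_iff] at hz; subst hz; exact hQvW
  have hWle : Module.finrank ℝ W ≤ 2 := curry_ker_bound hV γ hγ0
  have hWspan : Submodule.span ℝ ({v, Q v} : Set V) = W :=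
    Submodule.eq_of_le_of_finrank_le hspanleW (by rw [hspan2]; exact hWle)
  refine ⟨?_, hspan2⟩
  ext u
  simp only [Set.mem_setOf_eq, SetLike.mem_coe]
  constructor
  · intro hu
    rw [hWspan]
    apply hmemW
    intro m
    have hu' : ∀ t : V, β ![u, t] = 0 := fun t => hu t
    rw [hγdef, wedge22_apply, hu' (m 0), hu' (m 1), hu' (m 2)]
    ring
  · intro hu
    rw [Submodule.mem_span_pair] at hu
    obtain ⟨s, t, rfl⟩ := hu
    intro w
    have hlin : ω ![v, s • v + t • Q v, w] = (β.curryLeft (s • v + t • Q v)) ![w] := rfl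
    rw [hlin, map_add, map_smul, map_smul, AlternatingMap.add_apply,
      AlternatingMap.smul_apply, AlternatingMap.smul_apply]
    have e1 : (β.curryLeft v) ![w] = β ![v, w] := rfl
    have e2 : (β.curryLeft (Q v)) ![w] = β ![Q v, w] := rfl
    rw [e1, e2, hβz w, hphi w, smul_zero, smul_zero, add_zero]
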